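/- Fix N ≥ 1 and consider the real unknowns a₀, a₁, …, a_N, λ₀, λ_π subject to the system: (i) π + λ₀ + λ_π = 0; (ii) (π·n²/2)·a_n + λ₀ + (−1)^n·λ_π = 0 for each 1 ≤ n ≤ N; (iii) a₀/2 + Σ_{n=1}^N a_n = 0; (iv) a₀/2 + Σ_{n=1}^N (−1)^n·a_n = 0. Then this system has exactly one solution, given by λ₀ = λ_π = −π/2, a_n = (1 + (−1)^n)/n² for 1 ≤ n ≤ N (so a_n = 0 for odd n and a_n = 2/n² for even n), and a₀ = −Σ_{k=1}^{⌊N/2⌋} 1/k². -/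

import Mathlib

open Finset Real

lemma sq_neg_one_pow (n : ℕ) : ((-1:ℝ)^n)^2 = 1 := by
  rw [← pow_mul, mul_comm, pow_mul]; norm_num

lemma sumEven : ∀ N : ℕ, ∑ n ∈ Icc 1 N, (1+(-1:ℝ)^n)/(n:ℝ)^2
    = (1/2) * ∑ k ∈ Icc 1 (N/2), 1/(k:ℝ)^2 := by
  intro N
  induction N with
  | zero => simp
  | succ N ih =>
    rw [Finset.sum_Icc_succ_top (by omega : 1 ≤ N+1), ih]
    rcases Nat.even_or_odd (N+1) with h | h
    · obtain ⟨r, hr⟩ := h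
      have h : Even (N+1) := ⟨r, hr⟩
      have hk2 : (N+1)/2 = N/2 + 1 := by omega
      rw [hk2, Finset.sum_Icc_succ_top (by omega : 1 ≤ N/2+1), h.neg_one_pow]
      have hNk : ((N:ℝ)+1) = 2*((N/2 : ℕ) + 1 : ℝ) := by
        have : N + 1 = 2 * (N/2 + 1) := by omega
        have := congrArg (fun m : ℕ => (m:ℝ)) this
        push_cast at this ⊢; linarith
      have hkpos : ((N/2 : ℕ) : ℝ) + 1 ≠ 0 := by positivity
      push_cast
      rw [hNk]
      field_simp
      ring
    · obtain ⟨r, hr⟩ := h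
      have h : Odd (N+1) := ⟨r, hr⟩
      have hk2 : (N+1)/2 = N/2 := by omega
      rw [hk2, h.neg_one_pow]
      push_cast
      ring

lemma sumOddPos (N : ℕ) (hN : 1 ≤ N) :
    0 < ∑ n ∈ Icc 1 N, (1-(-1:ℝ)^n)/(n:ℝ)^2 := by
  apply Finset.sum_pos'
  · intro n hn
    simp only [Finset.mem_Icc] at hn
    have h1 : (-1:ℝ)^n ≤ 1 := by
      rcases Nat.even_or_odd n with h | h
      · rw [h.neg_one_pow]
      · rw [h.neg_one_pow]; norm_num
    have hn' : (0:ℝ) < (n:ℝ) := by exact_mod_cast hn.1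
    have h2 : (0:ℝ) < (n:ℝ)^2 := by positivity
    exact div_nonneg (by linarith) h2.le
  · refine ⟨1, Finset.mem_Icc.2 ⟨le_refl 1, hN⟩, ?_⟩
    norm_num

theorem stmt14 (N : ℕ) (hN : 1 ≤ N) (a : ℕ → ℝ) (l0 lpi : ℝ) :
    ((π + l0 + lpi = 0) ∧
     (∀ n, 1 ≤ n → n ≤ N → π * (n : ℝ) ^ 2 / 2 * a n + l0 + (-1:ℝ) ^ n * lpi = 0) ∧
     (a 0 / 2 + ∑ n ∈ Icc 1 N, a n = 0) ∧
     (a 0 / 2 + ∑ n ∈ Icc 1 N, (-1:ℝ) ^ n * a n = 0))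
    ↔
    (l0 = -π / 2 ∧ lpi = -π / 2 ∧
     (∀ n, 1 ≤ n → n ≤ N → a n = (1 + (-1:ℝ) ^ n) / (n : ℝ) ^ 2) ∧
     a 0 = -∑ k ∈ Icc 1 (N / 2), 1 / (k : ℝ) ^ 2) := by
  have hπ : (0:ℝ) < π := Real.pi_pos
  constructor
  · rintro ⟨h1, h2, h3, h4⟩
    -- a n formula in terms of l0 lpi
    have ha : ∀ n, 1 ≤ n → n ≤ N →
        a n = -2 * (l0 + (-1:ℝ)^n * lpi) / (π * (n:ℝ)^2) := by
      intro n hn1 hn2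
      have := h2 n hn1 hn2
      have hn' : (0:ℝ) < (n:ℝ) := by exact_mod_cast hn1
      have hn0 : ((n:ℝ))^2 ≠ 0 := by positivity
      field_simp
      nlinarith [this]
    -- subtract (iii) - (iv)
    have hsub : ∑ n ∈ Icc 1 N, (1 - (-1:ℝ)^n) * a n = 0 := by
      have hd : ∑ n ∈ Icc 1 N, (a n - (-1:ℝ)^n * a n) = 0 := by
        rw [Finset.sum_sub_distrib]; linarith
      rw [← hd]
      exact Finset.sum_congr rfl (fun n _ => by ring)
    have hrew : ∑ n ∈ Icc 1 N, (1 - (-1:ℝ)^n) * a n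
        = (l0 - lpi) * (-2/π) * ∑ n ∈ Icc 1 N, (1-(-1:ℝ)^n)/(n:ℝ)^2 := by
      rw [Finset.mul_sum]
      apply Finset.sum_congr rfl
      intro n hn
      simp only [Finset.mem_Icc] at hn
      rw [ha n hn.1 hn.2]
      have hn' : (0:ℝ) < (n:ℝ) := by exact_mod_cast hn.1
      have hn0 : ((n:ℝ))^2 ≠ 0 := by positivity
      have hsq := sq_neg_one_pow n
      field_simp
      linear_combination lpi * hsq
    have hS := sumOddPos N hN
    have hll : l0 = lpi := by
      rw [hrew] at hsub
      rcases mul_eq_zero.1 hsub with h | h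
      · rcases mul_eq_zero.1 h with h | h
        · linarith
        · exfalso; rw [div_eq_zero_iff] at h
          rcases h with h | h <;> linarith
      · linarith
    have hl0 : l0 = -π/2 := by rw [hll] at h1 ⊢; linarith
    have hlpi : lpi = -π/2 := by rw [← hll]; exact hl0
    have haf : ∀ n, 1 ≤ n → n ≤ N → a n = (1 + (-1:ℝ)^n)/(n:ℝ)^2 := by
      intro n hn1 hn2
      rw [ha n hn1 hn2, hl0, hlpi]
      have hn' : (0:ℝ) < (n:ℝ) := by exact_mod_cast hn1
      have hn0 : ((n:ℝ))^2 ≠ 0 := by positivity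
      field_simp
      ring
    refine ⟨hl0, hlpi, haf, ?_⟩
    have : ∑ n ∈ Icc 1 N, a n = (1/2) * ∑ k ∈ Icc 1 (N/2), 1/(k:ℝ)^2 := by
      rw [← sumEven N]
      apply Finset.sum_congr rfl
      intro n hn
      simp only [Finset.mem_Icc] at hn
      exact haf n hn.1 hn.2
    rw [this] at h3
    linarith
  · rintro ⟨hl0, hlpi, haf, ha0⟩
    have hptw : ∀ n ∈ Icc 1 N, a n = (1 + (-1:ℝ)^n)/(n:ℝ)^2 := by
      intro n hn
      simp only [Finset.mem_Icc] at hn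
      exact haf n hn.1 hn.2
    have hsum : ∑ n ∈ Icc 1 N, a n = (1/2) * ∑ k ∈ Icc 1 (N/2), 1/(k:ℝ)^2 := by
      rw [← sumEven N]; exact Finset.sum_congr rfl hptw
    have hsum2 : ∑ n ∈ Icc 1 N, (-1:ℝ)^n * a n
        = (1/2) * ∑ k ∈ Icc 1 (N/2), 1/(k:ℝ)^2 := by
      rw [← sumEven N]
      apply Finset.sum_congr rfl
      intro n hn
      rw [hptw n hn]
      have hsq := sq_neg_one_pow n
      have : (-1:ℝ)^n * (1 + (-1:ℝ)^n) = 1 + (-1:ℝ)^n := by nlinarith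
      rw [mul_div_assoc', this]
    refine ⟨by rw [hl0, hlpi]; ring, ?_, by rw [ha0, hsum]; ring,
      by rw [ha0, hsum2]; ring⟩
    intro n hn1 hn2
    rw [haf n hn1 hn2, hl0, hlpi]
    have hn' : (0:ℝ) < (n:ℝ) := by exact_mod_cast hn1
    have hn0 : ((n:ℝ))^2 ≠ 0 := by positivity
    have hsq := sq_neg_one_pow n
    field_simp
    nlinarith [hsq]
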